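/- Let w ∈ S_n and μ ∈ ℤⁿ. For every L ∈ S_w^μ and every 1 ≤ i ≤ n, one has D_{w({1,…,i})}(L) = μ_{w(1)} + … + μ_{w(i)} = Σ_{a ∈ w({1,…,i})} μ_a. That is, the function D_{w({1,…,i})} takes the constant value ⟨μ, w·Λ_i⟩ on the semi-infinite cell S_w^μ. -/

import Mathlib

open scoped Matrix

open Classical

noncomputable section

/-- The `(T, S)` minor (determinant of the submatrix with rows `T` and columns `S`, each
taken in increasing order) of a matrix over the Laurent series field `K = ℂ((t))`;
junk value `0` if `|T| ≠ |S|`. -/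
def laurentMinor {n : ℕ} (g : Matrix (Fin n) (Fin n) (LaurentSeries ℂ))
    (T S : Finset (Fin n)) : LaurentSeries ℂ :=
  if h : T.card = S.card then
    Matrix.det (Matrix.of fun p q : Fin S.card =>
      g (T.orderEmbOfFin h p) (S.orderEmbOfFin rfl q))
  else 0

/-- The valuation `val : ⋀^i Kⁿ → WithTop ℤ`, where an element of `⋀^i Kⁿ` is encoded by its
coordinates `u S` in the standard basis `{e_S : |S| = i}`: the minimum over `S` with
`u S ≠ 0` of the `t`-adic valuation (`HahnSeries.order`) of `u S` (and `⊤` for `u = 0`). -/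
def extVal (n i : ℕ) (u : {S : Finset (Fin n) // S.card = i} → LaurentSeries ℂ) :
    WithTop ℤ :=
  ((Finset.univ.filter fun S : {S : Finset (Fin n) // S.card = i} => u S ≠ 0).image
    fun S => (u S).order).min

/-- The action of `g ∈ Matrix (Fin n) (Fin n) K` on `⋀^i Kⁿ` in standard-basis coordinates:
`(⋀^i g)(e_S) = Σ_T det(g[T,S]) e_T`. -/
def extAct {n : ℕ} (i : ℕ) (g : Matrix (Fin n) (Fin n) (LaurentSeries ℂ))
    (u : {S : Finset (Fin n) // S.card = i} → LaurentSeries ℂ) :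
    {S : Finset (Fin n) // S.card = i} → LaurentSeries ℂ :=
  fun T => ∑ S : {S : Finset (Fin n) // S.card = i}, laurentMinor g T.val S.val * u S

/-- `h ∈ GL_n(O)` viewed inside the matrices over `K`: `h` is the entrywise image of an
invertible matrix over the power series ring `O = ℂ⟦t⟧`. -/
def InGLO (n : ℕ) (h : Matrix (Fin n) (Fin n) (LaurentSeries ℂ)) : Prop :=
  ∃ h₀ : GL (Fin n) (PowerSeries ℂ),
    (h₀ : Matrix (Fin n) (Fin n) (PowerSeries ℂ)).map (HahnSeries.ofPowerSeries ℤ ℂ) = h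

/-- `D_γ(g) = val((⋀^i g)(e_γ))` where `i = |γ|`, as a function of a matrix representative
`g` (with values in `WithTop ℤ`). -/
def Dgamma {n : ℕ} (γ : Finset (Fin n)) (g : Matrix (Fin n) (Fin n) (LaurentSeries ℂ)) :
    WithTop ℤ :=
  extVal n γ.card (extAct γ.card g fun S => if S.val = γ then 1 else 0)

/-- The diagonal matrix `t^μ = diag(t^{μ_1},…,t^{μ_n}) ∈ GL_n(K)` (as a matrix over
`K = ℂ((t))`), where `t^{μ_a}` is the Hahn series `single (μ a) 1`. -/
def tPow {n : ℕ} (μ : Fin n → ℤ) : Matrix (Fin n) (Fin n) (LaurentSeries ℂ) :=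
  Matrix.diagonal fun a => HahnSeries.single (μ a) (1 : ℂ)

/-- Membership in `N_w(K) = w N(K) w⁻¹`, where `N(K)` is the group of upper triangular
matrices over `K` with unit diagonal: `u ∈ N_w(K)` iff `u (w a) (w a) = 1` for all `a`
and `u (w a) (w b) = 0` whenever `b < a`. -/
def InNw {n : ℕ} (w : Equiv.Perm (Fin n))
    (u : Matrix (Fin n) (Fin n) (LaurentSeries ℂ)) : Prop :=
  (∀ a : Fin n, u (w a) (w a) = 1) ∧ ∀ a b : Fin n, b < a → u (w a) (w b) = 0

/-- The chamber weight `w({1,…,i})`, i.e. the image under `w` of the first `i` (0-based)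
indices. -/
def chamberSet {n : ℕ} (w : Equiv.Perm (Fin n)) (i : ℕ) : Finset (Fin n) :=
  (Finset.univ.filter fun a : Fin n => a.val < i).image w

section Aux

lemma finset_eq_image_orderEmbOfFin {α : Type*} [LinearOrder α] (s : Finset α) {k : ℕ}
    (h : s.card = k) : s = Finset.image (s.orderEmbOfFin h) Finset.univ := by
  ext x
  simp only [Finset.mem_image, Finset.mem_univ, true_and]
  constructor
  · intro hx
    have hr : x ∈ Set.range (s.orderEmbOfFin h) := by
      rw [Finset.range_orderEmbOfFin]; exact hx
    exact hr
  · rintro ⟨r, rfl⟩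
    exact Finset.orderEmbOfFin_mem s h r

lemma sum_orderEmbOfFin' {α M : Type*} [LinearOrder α] [AddCommMonoid M] (s : Finset α) {k : ℕ}
    (h : s.card = k) (f : α → M) :
    ∑ a ∈ s, f a = ∑ r : Fin k, f (s.orderEmbOfFin h r) := by
  conv_lhs => rw [finset_eq_image_orderEmbOfFin s h]
  rw [Finset.sum_image (fun a _ b _ hab => (s.orderEmbOfFin h).injective hab)]

lemma prod_single_one {ι : Type*} (s : Finset ι) (f : ι → ℤ) :
    (∏ a ∈ s, HahnSeries.single (f a) (1 : ℂ)) = HahnSeries.single (∑ a ∈ s, f a) (1 : ℂ) := by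
  induction s using Finset.cons_induction with
  | empty => simp [HahnSeries.single_zero_one]
  | cons a s ha ih =>
      rw [Finset.prod_cons, ih, HahnSeries.single_mul_single, Finset.sum_cons, mul_one]

lemma order_ofPowerSeries_nonneg (d : PowerSeries ℂ)
    (hd : (HahnSeries.ofPowerSeries ℤ ℂ) d ≠ 0) :
    0 ≤ ((HahnSeries.ofPowerSeries ℤ ℂ) d : LaurentSeries ℂ).order := by
  by_contra hlt
  push_neg at hlt
  have h0 := HahnSeries.coeff_order_eq_zero.not.2 hd
  apply h0
  rw [HahnSeries.ofPowerSeries_apply]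
  apply HahnSeries.embDomain_notin_range
  rintro ⟨m, hm⟩
  change ((m : ℤ)) = _ at hm
  rw [HahnSeries.ofPowerSeries_apply] at hlt
  omega

lemma order_ofPowerSeries_eq_zero (d : PowerSeries ℂ)
    (hd : PowerSeries.constantCoeff (R := ℂ) d ≠ 0) :
    (HahnSeries.ofPowerSeries ℤ ℂ) d ≠ 0 ∧
      ((HahnSeries.ofPowerSeries ℤ ℂ) d : LaurentSeries ℂ).order = 0 := by
  have hc : ((HahnSeries.ofPowerSeries ℤ ℂ) d).coeff ((0 : ℕ) : ℤ) ≠ 0 := by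
    rw [HahnSeries.ofPowerSeries_apply_coeff]
    simpa [PowerSeries.coeff_zero_eq_constantCoeff] using hd
  have hne : (HahnSeries.ofPowerSeries ℤ ℂ) d ≠ 0 := by
    intro h0; apply hc; rw [h0]; simp
  refine ⟨hne, le_antisymm ?_ (order_ofPowerSeries_nonneg d hne)⟩
  simpa using HahnSeries.order_le_of_coeff_ne_zero hc

lemma det_submatrix_triangular {n k : ℕ} (w : Equiv.Perm (Fin n))
    (u : Matrix (Fin n) (Fin n) (LaurentSeries ℂ))
    (hu1 : ∀ a : Fin n, u (w a) (w a) = 1)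
    (hu2 : ∀ a b : Fin n, b < a → u (w a) (w b) = 0)
    (c : Fin k → Fin n) (hc : Function.Injective c) :
    (Matrix.of fun r q : Fin k => u (c r) (c q)).det = 1 := by
  set τ : Fin k → Fin n := fun r => w.symm (c r) with hτ
  have hτinj : Function.Injective τ := fun a b hab => hc (w.symm.injective hab)
  set σ := Tuple.sort τ with hσ
  have hmono : Monotone (τ ∘ σ) := Tuple.monotone_sort τ
  have hsm : StrictMono (τ ∘ σ) := hmono.strictMono_of_injective (hτinj.comp σ.injective)
  have hkey : ∀ r : Fin k, w (τ (σ r)) = c (σ r) := fun r => by simp [hτ]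
  have hdet : ((Matrix.of fun r q : Fin k => u (c r) (c q)).submatrix σ σ).det
      = (Matrix.of fun r q : Fin k => u (c r) (c q)).det :=
    Matrix.det_submatrix_equiv_self σ _
  rw [← hdet]
  have htri : ((Matrix.of fun r q : Fin k => u (c r) (c q)).submatrix σ σ).BlockTriangular id := by
    intro p q hpq
    simp only [Matrix.submatrix_apply, Matrix.of_apply]
    have hlt : τ (σ q) < τ (σ p) := hsm hpq
    rw [← hkey p, ← hkey q]
    exact hu2 _ _ hlt
  rw [Matrix.det_of_upperTriangular htri]
  apply Finset.prod_eq_one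
  intro p _
  simp only [Matrix.submatrix_apply, Matrix.of_apply]
  rw [← hkey p]
  exact hu1 _

lemma exists_minor_ne_zero {n k : ℕ} (m : Matrix (Fin n) (Fin n) ℂ) (hm : IsUnit m.det)
    (c : Fin k → Fin n) (hc : Function.Injective c) :
    ∃ (T : Finset (Fin n)) (hT : T.card = k),
      (Matrix.of fun p q : Fin k => m (T.orderEmbOfFin hT p) (c q)).det ≠ 0 := by
  -- the square identity C' * B = 1
  have hinv : m⁻¹ * m = 1 := Matrix.nonsing_inv_mul m hm
  have hone : (1 : Matrix (Fin k) (Fin k) ℂ) =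
      (m⁻¹.submatrix c id) * (m.submatrix id c) := by
    ext p q
    rw [Matrix.mul_apply]
    have : ∑ j : Fin n, m⁻¹.submatrix c id p j * m.submatrix id c j q
        = (m⁻¹ * m) (c p) (c q) := by
      rw [Matrix.mul_apply]; rfl
    rw [this, hinv, Matrix.one_apply, Matrix.one_apply]
    by_cases h : p = q
    · simp [h]
    · rw [if_neg h, if_neg (fun hcc => h (hc hcc))]
  -- expansion of the determinant via multilinearity in rows
  have hrows : ((m⁻¹.submatrix c id) * (m.submatrix id c) : Matrix (Fin k) (Fin k) ℂ)
      = fun r : Fin k => ∑ j : Fin n, m⁻¹ (c r) j • (fun q : Fin k => m j (c q)) := by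
    ext p q
    rw [Matrix.mul_apply]
    simp [Finset.sum_apply]
  have hexp : (Matrix.detRowAlternating
        ((m⁻¹.submatrix c id) * (m.submatrix id c) : Matrix (Fin k) (Fin k) ℂ) : ℂ)
      = ∑ p : Fin k → Fin n, (∏ r : Fin k, m⁻¹ (c r) (p r)) •
          Matrix.detRowAlternating (Matrix.of fun r q : Fin k => m (p r) (c q)) := by
    rw [hrows]
    rw [show (Matrix.detRowAlternating (R := ℂ) (n := Fin k))
        (fun r : Fin k => ∑ j : Fin n, m⁻¹ (c r) j • (fun q : Fin k => m j (c q)))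
      = (Matrix.detRowAlternating (R := ℂ) (n := Fin k)).toMultilinearMap
        (fun r : Fin k => ∑ j : Fin n, m⁻¹ (c r) j • (fun q : Fin k => m j (c q))) from rfl]
    rw [MultilinearMap.map_sum]
    refine Finset.sum_congr rfl fun p _ => ?_
    exact MultilinearMap.map_smul_univ _ (fun r => m⁻¹ (c r) (p r)) (fun r q => m (p r) (c q))
  have hdet1 : (1 : ℂ) = ∑ p : Fin k → Fin n, (∏ r : Fin k, m⁻¹ (c r) (p r)) •
      Matrix.detRowAlternating (Matrix.of fun r q : Fin k => m (p r) (c q)) := by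
    have : (Matrix.detRowAlternating ((m⁻¹.submatrix c id) * (m.submatrix id c)) : ℂ)
        = Matrix.det ((m⁻¹.submatrix c id) * (m.submatrix id c)) := rfl
    rw [← hexp, this, ← hone, Matrix.det_one]
  obtain ⟨p, _, hp⟩ := Finset.exists_ne_zero_of_sum_ne_zero
    (by rw [← hdet1]; exact one_ne_zero)
  have hpinj : Function.Injective p := by
    by_contra hni
    apply hp
    have : Matrix.detRowAlternating (Matrix.of fun r q : Fin k => m (p r) (c q)) = 0 := by
      apply AlternatingMap.map_eq_zero_of_not_injective
      intro hinj
      apply hni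
      intro a b hab
      have : (Matrix.of fun r q : Fin k => m (p r) (c q)) a
          = (Matrix.of fun r q : Fin k => m (p r) (c q)) b := by
        funext q; simp [hab]
      exact hinj this
    rw [this, smul_zero]
  have hdetp : (Matrix.of fun r q : Fin k => m (p r) (c q)).det ≠ 0 := by
    intro h0
    apply hp
    rw [show Matrix.detRowAlternating (Matrix.of fun r q : Fin k => m (p r) (c q))
      = (Matrix.of fun r q : Fin k => m (p r) (c q)).det from rfl, h0, smul_zero]
  refine ⟨Finset.image p Finset.univ, by
    rw [Finset.card_image_of_injective _ hpinj, Finset.card_univ, Fintype.card_fin], ?_⟩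
  set T := Finset.image p Finset.univ with hTdef
  intro hT0
  set hT : T.card = k := by
    rw [hTdef, Finset.card_image_of_injective _ hpinj, Finset.card_univ, Fintype.card_fin]
  -- relate T.orderEmbOfFin to p via a permutation
  have hmem : ∀ r : Fin k, ∃ s : Fin k, p s = T.orderEmbOfFin hT r := by
    intro r
    have : T.orderEmbOfFin hT r ∈ T := Finset.orderEmbOfFin_mem T hT r
    obtain ⟨s, _, hs⟩ := Finset.mem_image.mp this
    exact ⟨s, hs⟩
  choose e he using hmem
  have heinj : Function.Injective e := by
    intro a b hab
    have := congrArg p hab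
    rw [he a, he b] at this
    exact (T.orderEmbOfFin hT).injective this
  have hebij : Function.Bijective e := (Finite.injective_iff_bijective).mp heinj
  set σ : Equiv.Perm (Fin k) := Equiv.ofBijective e hebij with hσ
  have hsub : (Matrix.of fun r q : Fin k => m (T.orderEmbOfFin hT r) (c q))
      = (Matrix.of fun r q : Fin k => m (p r) (c q)).submatrix σ id := by
    ext r q
    simp only [Matrix.submatrix_apply, Matrix.of_apply, id]
    rw [hσ]
    rw [show σ r = e r from rfl, he r]
  rw [hsub, Matrix.det_permute] at hT0
  rcases mul_eq_zero.mp hT0 with h1 | h2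
  · have : ((Equiv.Perm.sign σ : ℤ) : ℂ) ≠ 0 := by
      rcases Int.units_eq_one_or (Equiv.Perm.sign σ) with h | h <;> simp [h]
    exact this h1
  · exact hdetp h2

end Aux

/-- Lemma (\cite{K1}): the function `D_{w({1,…,i})}` takes the constant value
`⟨μ, w·Λ_i⟩ = μ_{w(1)} + … + μ_{w(i)}` on the semi-infinite cell
`S_w^μ = {[t^μ u] : u ∈ N_w(K)}`; i.e. for every representative `g = h ⬝ t^μ ⬝ u` with
`h ∈ GL_n(O)` and `u ∈ N_w(K)`, and every `1 ≤ i ≤ n`,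
`D_{w({1,…,i})}(g) = Σ_{a ∈ w({1,…,i})} μ_a`. -/
theorem Dgamma_constant_on_semiinfinite_cell
    (n : ℕ) (w : Equiv.Perm (Fin n)) (μ : Fin n → ℤ)
    (g : Matrix (Fin n) (Fin n) (LaurentSeries ℂ))
    (hg : ∃ h : Matrix (Fin n) (Fin n) (LaurentSeries ℂ), InGLO n h ∧
      ∃ u : Matrix (Fin n) (Fin n) (LaurentSeries ℂ), InNw w u ∧ g = h * tPow μ * u) :
    ∀ i : ℕ, 1 ≤ i → i ≤ n →
      Dgamma (chamberSet w i) g = ((∑ a ∈ chamberSet w i, μ a : ℤ) : WithTop ℤ) := by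
  obtain ⟨h, ⟨h₀, hh₀⟩, u, hu, rfl⟩ := hg
  intro i _ _
  set γ : Finset (Fin n) := chamberSet w i with hγ
  -- entries of h via h₀
  have hentry : ∀ a b : Fin n, h a b = (HahnSeries.ofPowerSeries ℤ ℂ)
      ((h₀ : Matrix (Fin n) (Fin n) (PowerSeries ℂ)) a b) := by
    intro a b; rw [← hh₀]; rfl
  -- membership facts for γ
  have hγmem : ∀ x ∈ γ, (w.symm x).val < i := by
    intro x hx
    rw [hγ, chamberSet, Finset.mem_image] at hx
    obtain ⟨b, hb, rfl⟩ := hx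
    simpa using (Finset.mem_filter.mp hb).2
  have hγnotmem : ∀ x : Fin n, x ∉ γ → ¬ (w.symm x).val < i := by
    intro x hx hlt
    apply hx
    rw [hγ, chamberSet, Finset.mem_image]
    exact ⟨w.symm x, by simpa using hlt, by simp⟩
  -- vanishing of columns of tPow μ * u outside γ
  have hcol : ∀ j : Fin n, j ∉ γ → ∀ x ∈ γ, (tPow μ * u) j x = 0 := by
    intro j hj x hx
    rw [tPow, Matrix.diagonal_mul]
    have hux : u j x = 0 := by
      have hlt : w.symm x < w.symm j := by
        rw [Fin.lt_def]
        have h1 := hγmem x hx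
        have h2 := hγnotmem j hj
        omega
      have := hu.2 (w.symm j) (w.symm x) hlt
      simpa using this
    rw [hux, mul_zero]
  -- the minor decomposition
  have hminor : ∀ T : Finset (Fin n), ∀ hT : T.card = γ.card,
      laurentMinor (h * tPow μ * u) T γ
        = laurentMinor h T γ * HahnSeries.single (∑ a ∈ γ, μ a) (1 : ℂ) := by
    intro T hT
    rw [laurentMinor, laurentMinor, dif_pos hT, dif_pos hT]
    have hfac : (Matrix.of fun p q : Fin γ.card =>
          (h * tPow μ * u) (T.orderEmbOfFin hT p) (γ.orderEmbOfFin rfl q))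
        = (Matrix.of fun p q : Fin γ.card =>
            h (T.orderEmbOfFin hT p) (γ.orderEmbOfFin rfl q)) *
          (Matrix.of fun r q : Fin γ.card =>
            (tPow μ * u) (γ.orderEmbOfFin rfl r) (γ.orderEmbOfFin rfl q)) := by
      refine Matrix.ext fun p q => ?_
      rw [Matrix.mul_apply]
      simp only [Matrix.of_apply]
      rw [mul_assoc, Matrix.mul_apply]
      rw [← Finset.sum_subset (Finset.subset_univ γ) (fun x _ hx => by
        rw [hcol x hx _ (Finset.orderEmbOfFin_mem γ rfl q), mul_zero])]
      rw [sum_orderEmbOfFin' γ rfl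
        (fun j => h (T.orderEmbOfFin hT p) j * (tPow μ * u) j (γ.orderEmbOfFin rfl q))]
    have hM : (Matrix.of fun r q : Fin γ.card =>
          (tPow μ * u) (γ.orderEmbOfFin rfl r) (γ.orderEmbOfFin rfl q))
        = Matrix.diagonal (fun r : Fin γ.card =>
            HahnSeries.single (μ (γ.orderEmbOfFin rfl r)) (1 : ℂ)) *
          (Matrix.of fun r q : Fin γ.card =>
            u (γ.orderEmbOfFin rfl r) (γ.orderEmbOfFin rfl q)) := by
      refine Matrix.ext fun r q => ?_
      rw [Matrix.diagonal_mul]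
      simp only [Matrix.of_apply]
      rw [tPow, Matrix.diagonal_mul]
    rw [hfac, Matrix.det_mul, hM, Matrix.det_mul, Matrix.det_diagonal,
      det_submatrix_triangular w u hu.1 hu.2 (γ.orderEmbOfFin rfl)
        ((γ.orderEmbOfFin rfl).injective),
      mul_one]
    congr 1
    rw [prod_single_one Finset.univ (fun r => μ (γ.orderEmbOfFin rfl r)),
      ← sum_orderEmbOfFin' γ rfl μ]
  -- the minor of h via the power series matrix
  have hminorφ : ∀ T : Finset (Fin n), ∀ hT : T.card = γ.card,
      laurentMinor h T γ = (HahnSeries.ofPowerSeries ℤ ℂ)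
        ((Matrix.of fun p q : Fin γ.card =>
          (h₀ : Matrix (Fin n) (Fin n) (PowerSeries ℂ))
            (T.orderEmbOfFin hT p) (γ.orderEmbOfFin rfl q)).det) := by
    intro T hT
    have hmat : (Matrix.of fun p q : Fin γ.card =>
          h (T.orderEmbOfFin hT p) (γ.orderEmbOfFin rfl q))
        = (HahnSeries.ofPowerSeries ℤ ℂ).mapMatrix (Matrix.of fun p q : Fin γ.card =>
            (h₀ : Matrix (Fin n) (Fin n) (PowerSeries ℂ))
              (T.orderEmbOfFin hT p) (γ.orderEmbOfFin rfl q)) := by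
      refine Matrix.ext fun p q => ?_
      rw [RingHom.mapMatrix_apply, Matrix.map_apply, Matrix.of_apply, Matrix.of_apply]
      exact hentry _ _
    rw [laurentMinor, dif_pos hT, hmat, RingHom.map_det]
  -- reduce Dgamma to minors
  have hD : Dgamma γ (h * tPow μ * u)
      = extVal n γ.card (fun T : {S : Finset (Fin n) // S.card = γ.card} =>
          laurentMinor (h * tPow μ * u) T.val γ) := by
    rw [Dgamma]
    congr 1
    funext T
    rw [extAct]
    rw [Fintype.sum_eq_single (⟨γ, rfl⟩ : {S : Finset (Fin n) // S.card = γ.card})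
      (fun S hS => by rw [if_neg (fun hv => hS (Subtype.ext hv)), mul_zero])]
    simp
  -- existence of a minor of h of order zero
  have hmunit : IsUnit ((h₀ : Matrix (Fin n) (Fin n) (PowerSeries ℂ)).map
      (PowerSeries.constantCoeff (R := ℂ))).det := by
    rw [← RingHom.mapMatrix_apply, ← RingHom.map_det]
    exact ((Matrix.isUnit_iff_isUnit_det _).mp h₀.isUnit).map (PowerSeries.constantCoeff (R := ℂ))
  obtain ⟨T₀, hT₀, hdet₀⟩ := exists_minor_ne_zero _ hmunit (γ.orderEmbOfFin rfl)
    ((γ.orderEmbOfFin rfl).injective)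
  have hcc₀ : PowerSeries.constantCoeff (R := ℂ)
      ((Matrix.of fun p q : Fin γ.card =>
        (h₀ : Matrix (Fin n) (Fin n) (PowerSeries ℂ))
          (T₀.orderEmbOfFin hT₀ p) (γ.orderEmbOfFin rfl q)).det) ≠ 0 := by
    have hmat2 : ((PowerSeries.constantCoeff (R := ℂ)).mapMatrix (Matrix.of fun p q : Fin γ.card =>
          (h₀ : Matrix (Fin n) (Fin n) (PowerSeries ℂ))
            (T₀.orderEmbOfFin hT₀ p) (γ.orderEmbOfFin rfl q)))
        = Matrix.of fun p q : Fin γ.card =>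
            ((h₀ : Matrix (Fin n) (Fin n) (PowerSeries ℂ)).map (PowerSeries.constantCoeff (R := ℂ)))
              (T₀.orderEmbOfFin hT₀ p) (γ.orderEmbOfFin rfl q) :=
      Matrix.ext fun p q => rfl
    rw [RingHom.map_det, hmat2]
    exact hdet₀
  obtain ⟨hφne₀, hord₀⟩ := order_ofPowerSeries_eq_zero _ hcc₀
  have hsne : (HahnSeries.single (∑ a ∈ γ, μ a) (1 : ℂ) : LaurentSeries ℂ) ≠ 0 :=
    HahnSeries.single_ne_zero one_ne_zero
  -- final computation of the min
  rw [hD, extVal]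
  apply le_antisymm
  · apply Finset.min_le
    rw [Finset.mem_image]
    refine ⟨⟨T₀, hT₀⟩, ?_, ?_⟩
    · rw [Finset.mem_filter]
      refine ⟨Finset.mem_univ _, ?_⟩
      rw [hminor T₀ hT₀, hminorφ T₀ hT₀]
      exact mul_ne_zero hφne₀ hsne
    · rw [hminor T₀ hT₀, hminorφ T₀ hT₀,
        HahnSeries.order_mul hφne₀ hsne, hord₀, zero_add,
        HahnSeries.order_single one_ne_zero]
  · apply Finset.le_min
    intro b hb
    rw [Finset.mem_image] at hb
    obtain ⟨T, hTf, rfl⟩ := hb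
    rw [Finset.mem_filter] at hTf
    have hTne := hTf.2
    rw [hminor T.val T.prop] at hTne ⊢
    have h1 : laurentMinor h T.val γ ≠ 0 := fun h0 => hTne (by rw [h0, zero_mul])
    rw [HahnSeries.order_mul h1 hsne, HahnSeries.order_single one_ne_zero]
    have h2 : 0 ≤ (laurentMinor h T.val γ).order := by
      rw [hminorφ T.val T.prop] at h1 ⊢
      exact order_ofPowerSeries_nonneg _ h1
    have h3 : (∑ a ∈ γ, μ a) ≤ (laurentMinor h T.val γ).order + ∑ a ∈ γ, μ a :=
      le_add_of_nonneg_left h2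
    exact_mod_cast h3
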